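/- Let G be a finite simple graph on Fin n, let d ≥ 1, r ≥ 1, and let c : Fin n → ℝ be arbitrary real coefficients. Let ρ be any density matrix on ℂ^d and let ψ be any rank-one orthogonal projection on ℂ^d (a pure state). Then for every family Π : Fin n → Matrix (Fin d) (Fin d) ℂ of rank-r orthogonal projections realizing G, there exists a family Π' of rank-r orthogonal projections realizing G such that ∑_k c_k · Re(tr(Π'_k * ψ)) ≥ ∑_k c_k · Re(tr(Π_k * ρ)). (Pure states are the most contextual states: the optimized value of any noncontextuality inequality functional at any pure state dominates its optimized value at every state.) -/

import Mathlib

open Matrix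
open scoped ComplexOrder

/-- A finset of vertices is independent: no two of its vertices are adjacent. -/
def IsIndep {n : ℕ} (G : SimpleGraph (Fin n)) (s : Finset (Fin n)) : Prop :=
  ∀ v ∈ s, ∀ u ∈ s, ¬ G.Adj v u

/-- Incidence vector of a finset of vertices. -/
def incVec {n : ℕ} (s : Finset (Fin n)) : Fin n → ℝ := fun v => if v ∈ s then 1 else 0

/-- STAB(G): the convex hull of the incidence vectors of the independent sets of `G`. -/
def STAB {n : ℕ} (G : SimpleGraph (Fin n)) : Set (Fin n → ℝ) :=
  convexHull ℝ {x | ∃ s : Finset (Fin n), IsIndep G s ∧ x = incVec s}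

/-- A fractional coloring of `G`: nonnegative weights supported on independent sets,
covering every vertex with total weight at least 1. -/
def IsFracColoring {n : ℕ} (G : SimpleGraph (Fin n)) (w : Finset (Fin n) → ℝ) : Prop :=
  (∀ s, 0 ≤ w s) ∧ (∀ s, w s ≠ 0 → IsIndep G s) ∧
    (∀ v : Fin n, 1 ≤ ∑ s : Finset (Fin n), if v ∈ s then w s else 0)

/-- Total weight of a weight assignment on independent sets. -/
def totalWeight {n : ℕ} (w : Finset (Fin n) → ℝ) : ℝ := ∑ s : Finset (Fin n), w s

/-- `P` is an orthogonal projection of rank `r`: Hermitian, idempotent, of rank `r`. -/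
def IsProjOfRank {d : ℕ} (r : ℕ) (P : Matrix (Fin d) (Fin d) ℂ) : Prop :=
  P.IsHermitian ∧ P * P = P ∧ P.rank = r

/-- A family of projectors realizes the orthogonality graph `G`:
adjacent vertices carry orthogonal projectors. -/
def Realizes {n d : ℕ} (G : SimpleGraph (Fin n)) (P : Fin n → Matrix (Fin d) (Fin d) ℂ) : Prop :=
  ∀ j k, G.Adj j k → P j * P k = 0

lemma permMatrix_conjT {d : ℕ} (σ : Equiv.Perm (Fin d)) :
    (σ.permMatrix ℂ)ᴴ = (σ⁻¹).permMatrix ℂ := by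
  ext i j
  simp only [conjTranspose_apply, PEquiv.toMatrix_toPEquiv_apply, Pi.single_apply]
  by_cases h : σ j = i
  · have h' : σ⁻¹ i = j := by rw [← h]; simp
    simp [h, h']
  · have h' : ¬ σ⁻¹ i = j := fun hc => h (by rw [← hc]; simp)
    rw [if_neg (Ne.symm h), if_neg (fun hc => h' hc.symm), star_zero]

lemma permMatrix_unitary {d : ℕ} (σ : Equiv.Perm (Fin d)) :
    σ.permMatrix ℂ ∈ Matrix.unitaryGroup (Fin d) ℂ := by
  rw [Matrix.mem_unitaryGroup_iff, Matrix.star_eq_conjTranspose, permMatrix_conjT]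
  show σ.toPEquiv.toMatrix * (σ⁻¹).toPEquiv.toMatrix = 1
  rw [← PEquiv.toMatrix_trans, ← Equiv.toPEquiv_trans]
  have : σ.trans σ⁻¹ = Equiv.refl (Fin d) := Equiv.self_trans_symm σ
  rw [this, Equiv.toPEquiv_refl, PEquiv.toMatrix_refl]

lemma trace_mul_diagonal' {d : ℕ} (M : Matrix (Fin d) (Fin d) ℂ) (v : Fin d → ℂ) :
    (M * diagonal v).trace = ∑ i, M i i * v i := by
  simp [Matrix.trace, Matrix.diag, Matrix.mul_diagonal]

lemma conj_eq_submatrix {d : ℕ} (σ : Equiv.Perm (Fin d)) (Q : Matrix (Fin d) (Fin d) ℂ) :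
    σ.permMatrix ℂ * Q * (σ.permMatrix ℂ)ᴴ = Q.submatrix σ σ := by
  rw [permMatrix_conjT]
  show σ.toPEquiv.toMatrix * Q * (σ⁻¹).toPEquiv.toMatrix = _
  rw [PEquiv.toMatrix_toPEquiv_mul, PEquiv.mul_toMatrix_toPEquiv, submatrix_submatrix]
  ext i j
  have : (Equiv.symm σ⁻¹) j = σ j := rfl
  simp [Matrix.submatrix_apply, this]


theorem stmt10 {n d : ℕ} (G : SimpleGraph (Fin n)) (r : ℕ) (hd : 1 ≤ d) (hr : 1 ≤ r)
    (c : Fin n → ℝ) (ρ : Matrix (Fin d) (Fin d) ℂ) (hρ : ρ.PosSemidef) (htr : ρ.trace = 1)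
    (ψ : Matrix (Fin d) (Fin d) ℂ) (hψ : IsProjOfRank 1 ψ) :
    ∀ P : Fin n → Matrix (Fin d) (Fin d) ℂ,
      (∀ k, IsProjOfRank r (P k)) → Realizes G P →
        ∃ P' : Fin n → Matrix (Fin d) (Fin d) ℂ,
          (∀ k, IsProjOfRank r (P' k)) ∧ Realizes G P' ∧
          ∑ k : Fin n, c k * ((P k * ρ).trace).re ≤
            ∑ k : Fin n, c k * ((P' k * ψ).trace).re := by
  unfold IsProjOfRank Realizes
  intro P hP hReal
  have hdne : Nonempty (Fin d) := ⟨⟨0, hd⟩⟩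
  have hρH : ρ.IsHermitian := hρ.1
  have hψH : ψ.IsHermitian := hψ.1
  set lam : Fin d → ℝ := hρH.eigenvalues with hlamdef
  set mu : Fin d → ℝ := hψH.eigenvalues with hmudef
  obtain ⟨U, hUmem, hspecρ⟩ :
      ∃ U : Matrix (Fin d) (Fin d) ℂ, U ∈ Matrix.unitaryGroup (Fin d) ℂ ∧
        ρ = U * diagonal (RCLike.ofReal ∘ lam) * star U :=
    ⟨_, hρH.eigenvectorUnitary.2, hρH.spectral_theorem⟩
  obtain ⟨V, hVmem, hspecψ⟩ :
      ∃ V : Matrix (Fin d) (Fin d) ℂ, V ∈ Matrix.unitaryGroup (Fin d) ℂ ∧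
        ψ = V * diagonal (RCLike.ofReal ∘ mu) * star V :=
    ⟨_, hψH.eigenvectorUnitary.2, hψH.spectral_theorem⟩
  have hUU : star U * U = 1 := (Matrix.mem_unitaryGroup_iff').mp hUmem
  have hUU' : U * star U = 1 := (Matrix.mem_unitaryGroup_iff).mp hUmem
  have hVV : star V * V = 1 := (Matrix.mem_unitaryGroup_iff').mp hVmem
  have hVV' : V * star V = 1 := (Matrix.mem_unitaryGroup_iff).mp hVmem
  have cV : ∀ X : Matrix (Fin d) (Fin d) ℂ, star V * (V * X) = X := fun X => by
    rw [← Matrix.mul_assoc, hVV, Matrix.one_mul]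
  have cU' : ∀ X : Matrix (Fin d) (Fin d) ℂ, U * (star U * X) = X := fun X => by
    rw [← Matrix.mul_assoc, hUU', Matrix.one_mul]
  -- eigenvalue facts for ρ
  have hlam_nn : ∀ i, 0 ≤ lam i := fun i => hρ.eigenvalues_nonneg i
  have hlam_sum : ∑ i, lam i = 1 := by
    have h1 : ρ.trace = ((∑ i, lam i : ℝ) : ℂ) := by
      rw [hspecρ, Matrix.trace_mul_cycle, hUU, Matrix.one_mul, Matrix.trace_diagonal]
      rw [show ((RCLike.ofReal : ℝ → ℂ) ∘ lam = fun i => ((lam i : ℝ) : ℂ)) from rfl]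
      norm_cast
      exact (Complex.ofReal_sum _ _).symm
    rw [htr] at h1
    exact_mod_cast h1.symm
  -- eigenvalue facts for ψ
  have hDψ : star V * ψ * V = diagonal (RCLike.ofReal ∘ mu) := by
    rw [hspecψ]
    calc star V * (V * diagonal (RCLike.ofReal ∘ mu) * star V) * V
        = (star V * V) * (diagonal (RCLike.ofReal ∘ mu) : Matrix (Fin d) (Fin d) ℂ)
            * (star V * V) := by
          simp only [Matrix.mul_assoc]
      _ = diagonal (RCLike.ofReal ∘ mu) := by rw [hVV, Matrix.one_mul, Matrix.mul_one]
  have hDD : (diagonal (RCLike.ofReal ∘ mu) : Matrix (Fin d) (Fin d) ℂ)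
        * diagonal (RCLike.ofReal ∘ mu)
      = diagonal (RCLike.ofReal ∘ mu) := by
    conv_lhs => rw [← hDψ]
    calc (star V * ψ * V) * (star V * ψ * V)
        = star V * (ψ * ((V * star V) * (ψ * V))) := by simp only [Matrix.mul_assoc]
      _ = star V * (ψ * (ψ * V)) := by rw [hVV', Matrix.one_mul]
      _ = star V * ((ψ * ψ) * V) := by simp only [Matrix.mul_assoc]
      _ = diagonal (RCLike.ofReal ∘ mu) := by
          rw [hψ.2.1, ← Matrix.mul_assoc, hDψ]
  have hmu01 : ∀ i, mu i = 0 ∨ mu i = 1 := by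
    intro i
    rw [Matrix.diagonal_mul_diagonal] at hDD
    have h := congrFun (congrFun hDD i) i
    simp only [Matrix.diagonal_apply_eq, Pi.mul_apply, Function.comp_apply] at h
    have h2 : mu i * mu i = mu i := by exact_mod_cast h
    have h3 : mu i * (mu i - 1) = 0 := by ring_nf; linarith [h2]
    rcases mul_eq_zero.mp h3 with h4 | h4
    · exact Or.inl h4
    · exact Or.inr (by linarith)
  have hcard : Fintype.card {i // mu i ≠ 0} = 1 := by
    have h := hψH.rank_eq_card_non_zero_eigs
    rw [hψ.2.2] at h
    exact h.symm
  obtain ⟨⟨j0, hj0ne⟩, hjuniq⟩ := Fintype.card_eq_one_iff.mp hcard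
  have hmuj0 : mu j0 = 1 := (hmu01 j0).resolve_left hj0ne
  have hmu0 : ∀ i, i ≠ j0 → mu i = 0 := by
    intro i hij
    by_contra hne
    exact hij (congrArg Subtype.val (hjuniq ⟨i, hne⟩))
  -- the rotated projectors
  set Q : Fin n → Matrix (Fin d) (Fin d) ℂ := fun k => star U * P k * U with hQdef
  set g : Fin d → ℝ := fun i => ∑ k, c k * (Q k i i).re with hgdef
  obtain ⟨i0, -, hmax⟩ := Finset.exists_max_image Finset.univ g Finset.univ_nonempty
  set σ : Equiv.Perm (Fin d) := Equiv.swap j0 i0 with hσdef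
  set S : Matrix (Fin d) (Fin d) ℂ := σ.permMatrix ℂ with hSdef
  set B : Matrix (Fin d) (Fin d) ℂ := V * S * star U with hBdef
  have hBmem : B ∈ Matrix.unitaryGroup (Fin d) ℂ :=
    mul_mem (mul_mem hVmem (permMatrix_unitary σ)) (Unitary.star_mem hUmem)
  have hBB : star B * B = 1 := (Matrix.mem_unitaryGroup_iff').mp hBmem
  have hBB' : B * star B = 1 := (Matrix.mem_unitaryGroup_iff).mp hBmem
  have hstarB : star B = U * star S * star V := by
    rw [hBdef]
    simp only [Matrix.star_mul, star_star, Matrix.mul_assoc]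
  have hdetB : IsUnit B.det := by
    have h := congrArg Matrix.det hBB'
    rw [Matrix.det_mul, Matrix.det_one] at h
    exact IsUnit.of_mul_eq_one _ h
  have hdetsB : IsUnit (star B).det := by
    have h := congrArg Matrix.det hBB
    rw [Matrix.det_mul, Matrix.det_one] at h
    exact IsUnit.of_mul_eq_one _ h
  refine ⟨fun k => B * P k * star B, fun k => ⟨?_, ?_, ?_⟩, ?_, ?_⟩
  · -- Hermitian
    have h1 : (P k)ᴴ = P k := (hP k).1
    show (B * P k * star B)ᴴ = B * P k * star B
    simp only [Matrix.star_eq_conjTranspose, Matrix.conjTranspose_mul,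
      Matrix.conjTranspose_conjTranspose, h1, Matrix.mul_assoc]
  · -- idempotent
    show (B * P k * star B) * (B * P k * star B) = B * P k * star B
    have e : (B * P k * star B) * (B * P k * star B)
        = B * (P k * ((star B * B) * (P k * star B))) := by
      simp only [Matrix.mul_assoc]
    rw [e, hBB, Matrix.one_mul, ← Matrix.mul_assoc (P k) (P k) (star B), (hP k).2.1]
    simp only [Matrix.mul_assoc]
  · -- rank
    show (B * P k * star B).rank = r
    rw [Matrix.mul_assoc, Matrix.rank_mul_eq_right_of_isUnit_det B _ hdetB,
      Matrix.rank_mul_eq_left_of_isUnit_det (star B) (P k) hdetsB]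
    exact (hP k).2.2
  · -- realizes
    intro j k hadj
    have e : (B * P j * star B) * (B * P k * star B)
        = B * (P j * ((star B * B) * (P k * star B))) := by
      simp only [Matrix.mul_assoc]
    rw [e, hBB, Matrix.one_mul, ← Matrix.mul_assoc (P j) (P k) (star B), hReal j k hadj,
      Matrix.zero_mul, Matrix.mul_zero]
  · -- the inequality
    have key1 : ∀ k, (P k * ρ).trace = ∑ i, Q k i i * ((lam i : ℝ) : ℂ) := by
      intro k
      rw [hspecρ]
      have e : P k * (U * diagonal (RCLike.ofReal ∘ lam) * star U)
          = U * (Q k * diagonal (RCLike.ofReal ∘ lam)) * star U := by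
        rw [hQdef]
        simp only [Matrix.mul_assoc]
        rw [cU']
      rw [e, Matrix.trace_mul_cycle, hUU, Matrix.one_mul, trace_mul_diagonal']
      exact Finset.sum_congr rfl fun i _ => rfl
    have key2 : ∀ k, ((B * P k * star B) * ψ).trace = Q k i0 i0 := by
      intro k
      rw [hspecψ]
      have e : (B * P k * star B) * (V * diagonal (RCLike.ofReal ∘ mu) * star V)
          = V * ((S * Q k * star S * diagonal (RCLike.ofReal ∘ mu)) * star V) := by
        rw [hBdef, hstarB, hQdef]
        simp only [Matrix.mul_assoc]
        rw [cV]
      rw [e, Matrix.trace_mul_comm, Matrix.mul_assoc, hVV, Matrix.mul_one,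
        Matrix.star_eq_conjTranspose, hSdef, conj_eq_submatrix σ (Q k), trace_mul_diagonal']
      rw [Finset.sum_eq_single j0]
      · simp only [Matrix.submatrix_apply, Function.comp_apply, hσdef, Equiv.swap_apply_left,
          hmuj0]
        norm_num
      · intro b _ hb
        simp [hmu0 b hb]
      · intro h
        exact absurd (Finset.mem_univ _) h
    have lhs_eq : ∑ k : Fin n, c k * ((P k * ρ).trace).re = ∑ i, lam i * g i := by
      calc ∑ k : Fin n, c k * ((P k * ρ).trace).re
          = ∑ k : Fin n, c k * ∑ i, lam i * (Q k i i).re := by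
            refine Finset.sum_congr rfl fun k _ => ?_
            rw [key1, Complex.re_sum]
            congr 1
            refine Finset.sum_congr rfl fun i _ => ?_
            simp [Complex.mul_re]
            ring
        _ = ∑ i, lam i * g i := by
            simp only [hgdef, Finset.mul_sum]
            rw [Finset.sum_comm]
            exact Finset.sum_congr rfl fun i _ => Finset.sum_congr rfl fun k _ => by ring
    have rhs_eq : ∑ k : Fin n, c k * (((B * P k * star B) * ψ).trace).re = g i0 := by
      simp only [key2, hgdef]
    rw [lhs_eq, rhs_eq]
    calc ∑ i, lam i * g i
        ≤ ∑ i, lam i * g i0 :=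
          Finset.sum_le_sum fun i _ =>
            mul_le_mul_of_nonneg_left (hmax i (Finset.mem_univ i)) (hlam_nn i)
      _ = (∑ i, lam i) * g i0 := (Finset.sum_mul _ _ _).symm
      _ = g i0 := by rw [hlam_sum, one_mul]
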